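/- Let N' be the A-module generated by symbols [f_i,f_j] subject to: (1) d_k f_k [f_i,f_j] = d_j f_j [f_i,f_k] + d_i f_i [f_k,f_j] and [f_i,f_j] + [f_j,f_i] = 0, and (2) Σ_ν (∂_ν R)(f)·[f_ν,f_μ] = 0 for every isobaric relation R among f_1,…,f_m and every μ. Then the assignment [f_i,f_j] ↦ {f_i,f_j} defines a well-defined surjective A-module homomorphism N' → N. -/

import Mathlib

open MvPolynomial

/-- Chain rule for derivations on values of multivariate polynomials. -/
lemma derivation_aeval_eq {K Q M : Type*} [CommRing K] [CommRing Q] [Algebra K Q]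
    [AddCommGroup M] [Module K M] [Module Q M] [IsScalarTower K Q M]
    (D : Derivation K Q M) {m : ℕ} (y : Fin m → Q) (R : MvPolynomial (Fin m) K) :
    D (aeval y R) = ∑ ν, aeval y (pderiv ν R) • D (y ν) := by
  induction R using MvPolynomial.induction_on with
  | C a => simp [Derivation.map_algebraMap]
  | add p q hp hq => simp [hp, hq, add_smul, Finset.sum_add_distrib]
  | mul_X p i hp =>
      have : ∀ ν : Fin m, aeval y (pderiv ν (p * X i)) • D (y ν)
          = (aeval y (pderiv ν p) * y i) • D (y ν)
            + (if ν = i then aeval y p • D (y ν) else 0) := by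
        intro ν
        rw [Derivation.leibniz]
        simp only [pderiv_X, map_add, map_mul, aeval_X, smul_eq_mul]
        by_cases h : ν = i <;> simp [h, add_smul, Pi.single_apply, mul_comm, add_comm]
      rw [map_mul, aeval_X, Derivation.leibniz, hp]
      simp only [this, Finset.sum_add_distrib, Finset.sum_ite_eq', Finset.mem_univ, if_true,
        Finset.smul_sum, smul_smul]
      rw [add_comm]
      congr 1
      refine Finset.sum_congr rfl fun ν _ => ?_
      rw [mul_comm]

/-- Euler identity for monomials, at the level of polynomials. -/
lemma euler_monomial {K : Type*} [CommRing K] {m : ℕ} (d : Fin m → ℕ)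
    (v : Fin m →₀ ℕ) (c : K) :
    ∑ ν, d ν • (X ν * pderiv ν (monomial v c)) =
      (∑ ν, d ν * v ν) • (monomial v c : MvPolynomial (Fin m) K) := by
  have key : ∀ ν : Fin m, X ν * pderiv ν (monomial v c) = v ν • monomial v c := by
    intro ν
    rw [pderiv_monomial]
    rcases Nat.eq_zero_or_pos (v ν) with h | h
    · simp [h]
    · rw [X, monomial_mul, one_mul, add_tsub_cancel_of_le (Finsupp.single_le_iff.2 h)]
      rw [smul_monomial, nsmul_eq_mul, mul_comm]
  simp only [key, smul_smul, ← Finset.sum_smul]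

/-- Weighted Euler identity after evaluation. -/
lemma euler_aeval {K A : Type*} [CommRing K] [CommRing A] [Algebra K A]
    {m : ℕ} (f : Fin m → A) (d : Fin m → ℕ) (k : ℕ) (R : MvPolynomial (Fin m) K)
    (hk : ∀ v ∈ R.support, ∑ i, d i * v i = k) :
    ∑ ν, (d ν : A) * (f ν * aeval f (pderiv ν R)) = (k : A) * aeval f R := by
  have key : ∑ ν, d ν • (X ν * pderiv ν R) = k • R := by
    conv_lhs => rw [R.as_sum]
    conv_rhs => rw [R.as_sum]
    simp only [map_sum, Finset.mul_sum, Finset.smul_sum]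
    rw [Finset.sum_comm]
    refine Finset.sum_congr rfl fun v hv => ?_
    rw [euler_monomial d v, hk v hv]
  have := congrArg (aeval f) key
  simpa [Finset.mul_sum, mul_comm, mul_left_comm, nsmul_eq_mul] using this
/-- abstract version of the Jacobi-type relation among brackets. -/
lemma bracket_rel_aux {Q M : Type*} [CommRing Q] [AddCommGroup M] [Module Q M]
    (dk dj di fk fj fi : Q) (Dk Dj Di : M) :
    (dk * fk) • (dj • (fj • Di) - di • (fi • Dj)) -
      (dj * fj) • (dk • (fk • Di) - di • (fi • Dk)) -
      (di * fi) • (dj • (fj • Dk) - dk • (fk • Dj)) = 0 := by module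

/-- abstract per-term rearrangement. -/
lemma bracket_term_aux {Q M : Type*} [CommRing Q] [AddCommGroup M] [Module Q M]
    (g a fu c fv : Q) (Dv Du : M) :
    g • (a • (fu • Dv) - c • (fv • Du)) = (a * fu) • (g • Dv) - (c * (fv * g)) • Du := by
  module

set_option maxHeartbeats 1000000 in
open MvPolynomial in
/-- the assignment [f_i,f_j] ↦ {f_i,f_j} gives a well-defined surjective
    A-module homomorphism from the abstractly presented module N' onto N. -/
theorem presented_module_maps_onto_bracket_module
    {K A : Type*} [Field K] [CharZero K] [CommRing A] [IsDomain A] [Algebra K A]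
    (𝒜 : ℕ → Submodule K A) [GradedAlgebra 𝒜]
    {m : ℕ} (f : Fin m → A) (d : Fin m → ℕ)
    (hd : ∀ i, 0 < d i) (hhom : ∀ i, f i ∈ 𝒜 (d i)) (hf0 : ∀ i, f i ≠ 0)
    (hgen : Algebra.adjoin K (Set.range f) = ⊤) :
    letI Q := FractionRing A
    letI ι := algebraMap A (FractionRing A)
    letI D := KaehlerDifferential.D K (FractionRing A)
    letI : Module A (KaehlerDifferential K (FractionRing A)) :=
      Module.compHom _ (algebraMap A (FractionRing A))
    ∀ Rel : Submodule A ((Fin m × Fin m) →₀ A),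
      Rel = Submodule.span A
        ({x | ∃ i j k : Fin m,
            x = Finsupp.single (i, j) ((d k : A) * f k)
              - Finsupp.single (i, k) ((d j : A) * f j)
              - Finsupp.single (k, j) ((d i : A) * f i)} ∪
         {x | ∃ i j : Fin m, x = Finsupp.single (i, j) (1 : A) + Finsupp.single (j, i) (1 : A)} ∪
         {x | ∃ (R : MvPolynomial (Fin m) K) (μ : Fin m) (k : ℕ),
            (∀ v ∈ R.support, ∑ i, d i * v i = k) ∧ aeval f R = 0 ∧
            x = ∑ ν, Finsupp.single (ν, μ) (aeval f (pderiv ν R))}) →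
      ∃ φ : (((Fin m × Fin m) →₀ A) ⧸ Rel) →ₗ[A] KaehlerDifferential K (FractionRing A),
        (∀ i j : Fin m,
          φ (Submodule.Quotient.mk (Finsupp.single (i, j) (1 : A))) =
            (d j : Q) • (ι (f j) • D (ι (f i))) - (d i : Q) • (ι (f i) • D (ι (f j)))) ∧
        LinearMap.range φ =
          Submodule.span A {ω : KaehlerDifferential K (FractionRing A) |
            ∃ i j : Fin m,
              ω = (d j : Q) • (ι (f j) • D (ι (f i))) - (d i : Q) • (ι (f i) • D (ι (f j)))} := by
  classical
  letI Q := FractionRing A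
  letI ι := algebraMap A (FractionRing A)
  letI D := KaehlerDifferential.D K (FractionRing A)
  letI : Module A (KaehlerDifferential K (FractionRing A)) :=
    Module.compHom _ (algebraMap A (FractionRing A))
  intro Rel hRel
  have hsmul : ∀ (a : A) (x : KaehlerDifferential K (FractionRing A)),
      @HSMul.hSMul A _ _ (@instHSMul _ _ this.toDistribMulAction.toMulAction.toSMul) a x = ι a • x :=
      fun _ _ => rfl
  set b : Fin m × Fin m → KaehlerDifferential K (FractionRing A) :=
    fun p => (d p.2 : Q) • (ι (f p.2) • D (ι (f p.1)))
      - (d p.1 : Q) • (ι (f p.1) • D (ι (f p.2))) with hb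
  set ℓ : ((Fin m × Fin m) →₀ A) →ₗ[A] KaehlerDifferential K (FractionRing A) :=
    Finsupp.linearCombination A b with hℓ
  have hℓs : ∀ (p : Fin m × Fin m) (a : A), ℓ (Finsupp.single p a) = ι a • b p := by
    intro p a
    rw [hℓ, Finsupp.linearCombination_single, hsmul]
  have hker : Rel ≤ LinearMap.ker ℓ := by
    rw [hRel, Submodule.span_le]
    rintro x ((⟨i, j, k, rfl⟩ | ⟨i, j, rfl⟩) | ⟨R, μ, k, hw, hR0, rfl⟩) <;>
      simp only [SetLike.mem_coe, LinearMap.mem_ker, map_sub, map_add, map_sum, hℓs]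
    · simp only [hb, map_mul, map_natCast]
      exact bracket_rel_aux _ _ _ _ _ _ _ _ _
    · simp only [hb, map_one, one_smul]
      abel
    · -- the relations coming from isobaric relations among the `f i`
      have hchain : ∑ ν, ι (aeval f (pderiv ν R)) • D (ι (f ν)) = 0 := by
        have h1 : ∀ P : MvPolynomial (Fin m) K,
            ι (aeval f P) = aeval (fun i => ι (f i)) P := fun P =>
          MvPolynomial.comp_aeval_apply f (IsScalarTower.toAlgHom K A Q) P
        have := derivation_aeval_eq D (fun i => ι (f i)) R
        rw [← h1, hR0, map_zero, map_zero] at this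
        simp only [h1]
        exact this.symm
      have heuler : ι (∑ ν, (d ν : A) * (f ν * aeval f (pderiv ν R))) = 0 := by
        rw [euler_aeval f d k R hw, hR0, mul_zero, map_zero]
      calc ∑ ν, ι (aeval f (pderiv ν R)) • b (ν, μ)
          = ∑ ν, (((d μ : Q) * ι (f μ)) • (ι (aeval f (pderiv ν R)) • D (ι (f ν)))
              - ((d ν : Q) * (ι (f ν) * ι (aeval f (pderiv ν R)))) • D (ι (f μ))) := by
            refine Finset.sum_congr rfl fun ν _ => ?_
            simp only [hb]
            exact bracket_term_aux _ _ _ _ _ _ _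
        _ = ((d μ : Q) * ι (f μ)) • (∑ ν, ι (aeval f (pderiv ν R)) • D (ι (f ν)))
              - (∑ ν, (d ν : Q) * (ι (f ν) * ι (aeval f (pderiv ν R)))) • D (ι (f μ)) := by
            rw [Finset.sum_sub_distrib, Finset.smul_sum, Finset.sum_smul]
        _ = 0 := by
            have hcast : ∑ ν, (d ν : Q) * (ι (f ν) * ι (aeval f (pderiv ν R)))
                = ι (∑ ν, (d ν : A) * (f ν * aeval f (pderiv ν R))) := by
              rw [map_sum]
              exact Finset.sum_congr rfl fun ν _ => by rw [map_mul, map_mul, map_natCast]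
            rw [hchain, hcast, heuler, smul_zero, zero_smul, sub_zero]
  refine ⟨Submodule.liftQ Rel ℓ hker, fun i j => ?_, ?_⟩
  · rw [Submodule.liftQ_apply, hℓs, map_one, one_smul]
  · rw [Submodule.range_liftQ, hℓ, Finsupp.range_linearCombination]
    congr 1
    ext ω
    constructor
    · rintro ⟨⟨i, j⟩, rfl⟩; exact ⟨i, j, rfl⟩
    · rintro ⟨i, j, rfl⟩; exact ⟨(i, j), rfl⟩
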